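/- arXiv:1901.06816 — 3 statements merged into one kernel-verified Lean document; each statement's English description precedes it below -/
import Mathlib

section
/- Let R be a ring, P a dg-projective cochain complex of R-modules, and f : M → M' a quasi-isomorphism of cochain complexes of R-modules. Then the map Hom^•(P,M) → Hom^•(P,M') given in each degree by postcomposition with f is a quasi-isomorphism of cochain complexes. -/
/-!
STATEMENT 0: Let R be a ring, P a dg-projective cochain complex of R-modules, and
f : M ⟶ M' a quasi-isomorphism of cochain complexes of R-modules. Then the map
Hom^•(P,M) → Hom^•(P,M') given in each degree by postcomposition with f is a
quasi-isomorphism of cochain complexes.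
-/

open CategoryTheory CategoryTheory.Limits CochainComplex CochainComplex.HomComplex

/-- A cochain complex of `R`-modules is dg-projective if each of its components is a
projective `R`-module and every chain map from it to an acyclic complex is
null-homotopic. -/
def IsDGProjective {R : Type} [Ring R] (P : CochainComplex (ModuleCat R) ℤ) : Prop :=
  (∀ i : ℤ, Module.Projective R (P.X i)) ∧
  ∀ (C : CochainComplex (ModuleCat R) ℤ), (∀ i : ℤ, IsZero (C.homology i)) →
    ∀ g : P ⟶ C, Nonempty (Homotopy g 0)

namespace DGAux

/-- A morphism is a quasi-isomorphism iff its mapping cone is acyclic. -/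
lemma quasiIso_iff_exactAt_mappingCone {A : Type*} [Category A] [Abelian A]
    {K L : CochainComplex A ℤ} (φ : K ⟶ L) :
    QuasiIso φ ↔ ∀ n : ℤ, (mappingCone φ).ExactAt n := by
  rw [← HomologicalComplex.mem_quasiIso_iff,
    ← HomotopyCategory.quotient_map_mem_quasiIso_iff,
    HomotopyCategory.quasiIso_eq_trW_subcategoryAcyclic]
  exact ((HomotopyCategory.subcategoryAcyclic A).trW_iff_of_distinguished _
    (HomotopyCategory.mappingCone_triangleh_distinguished φ)).trans
    (HomotopyCategory.quotient_obj_mem_subcategoryAcyclic_iff_exactAt _)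

/-- If every chain map from `P` to an acyclic complex is null-homotopic, then the
Hom complex `Hom^•(P, C)` is acyclic for every acyclic `C`. -/
lemma homComplex_exactAt {R : Type} [Ring R] {P : CochainComplex (ModuleCat R) ℤ}
    (hP : ∀ (C : CochainComplex (ModuleCat R) ℤ), (∀ i : ℤ, IsZero (C.homology i)) →
      ∀ g : P ⟶ C, Nonempty (Homotopy g 0))
    {C : CochainComplex (ModuleCat R) ℤ}
    (hC : ∀ i : ℤ, IsZero (C.homology i)) (n : ℤ) :
    (HomComplex P C).ExactAt n := by
  rw [HomologicalComplex.exactAt_iff' _ (n-1) n (n+1) (by simp) (by simp),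
    ShortComplex.ab_exact_iff]
  intro (z : Cochain P C n) hz
  replace hz : δ n (n+1) z = 0 := hz
  -- the shifted complex is acyclic
  have hC' : ∀ i : ℤ, IsZero ((C⟦n⟧).homology i) := fun i =>
    (hC (n+i)).of_iso ((CochainComplex.ShiftSequence.shiftIso (ModuleCat R) n i (n+i) rfl).app C)
  -- the right shift of z is a 0-cocycle
  have hz' : δ 0 1 (z.rightShift n 0 (zero_add n)) = 0 := by
    rw [Cochain.δ_rightShift z n 0 1 (zero_add n) (n+1) (by omega), hz,
      Cochain.rightShift_zero, smul_zero]
  set φ : P ⟶ C⟦(n : ℤ)⟧ := Cocycle.homOf (Cocycle.mk (z.rightShift n 0 (zero_add n)) 1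
    (zero_add 1) hz') with hφ
  obtain ⟨h, hh⟩ := (Cochain.equivHomotopy φ 0) (hP _ hC' φ).some
  have hδh : δ (-1) 0 h = z.rightShift n 0 (zero_add n) := by
    rw [Cochain.ofHom_zero, add_zero] at hh
    rw [← hh, hφ, Cocycle.cochain_ofHom_homOf_eq_coe]
    rfl
  refine ⟨n.negOnePow • h.rightUnshift (n-1) (by omega), ?_⟩
  show δ (n-1) n (n.negOnePow • h.rightUnshift (n-1) (by omega)) = z
  rw [δ_units_smul, Cochain.δ_rightUnshift h (n-1) (by omega) n 0 (zero_add n), hδh,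
    Cochain.rightUnshift_rightShift, smul_smul, Int.units_mul_self, one_smul]

variable {C : Type*} [Category C] [Preadditive C] [HasBinaryBiproducts C]

/-- The chain map `Hom^•(P, M) ⟶ Hom^•(P, M')` given by postcomposition with `f`. -/
noncomputable def postcomp (P : CochainComplex C ℤ) {M M' : CochainComplex C ℤ} (f : M ⟶ M') :
    HomComplex P M ⟶ HomComplex P M' where
  f n := AddCommGrpCat.ofHom
    { toFun := fun α => α.comp (Cochain.ofHom f) (add_zero n)
      map_zero' := Cochain.zero_comp _ _
      map_add' := fun a b => Cochain.add_comp a b _ (add_zero n) }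
  comm' := by
    intro i j hij
    ext (α : Cochain P M i)
    show δ i j (α.comp (Cochain.ofHom f) (add_zero i)) =
      (δ i j α).comp (Cochain.ofHom f) (add_zero j)
    exact δ_comp_ofHom α f j

variable (P : CochainComplex C ℤ) {M M' : CochainComplex C ℤ} (f : M ⟶ M')

/-- The degree `-1` cochain sending `z` to `z.comp (inl f)`. -/
noncomputable def alpha :
    Cochain (HomComplex P M) (HomComplex P (mappingCone f)) (-1) :=
  Cochain.mk (fun p q hpq => AddCommGrpCat.ofHom
    { toFun := fun z => (z : Cochain P M p).comp (mappingCone.inl f) hpq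
      map_zero' := Cochain.zero_comp _ _
      map_add' := fun a b => Cochain.add_comp a b _ hpq })

lemma delta_alpha :
    δ (-1) 0 (alpha P f) =
      Cochain.ofHom (postcomp P f ≫ postcomp P (mappingCone.inr f)) := by
  ext p z
  change Cochain P M p at z
  rw [δ_v (-1) 0 (neg_add_cancel 1) _ p p (add_zero p) (p-1) (p+1) (by omega) rfl,
    Cochain.ofHom_v, Int.negOnePow_zero, one_smul]
  show δ (p-1) p (z.comp (mappingCone.inl f) (by omega)) +
      (δ p (p+1) z).comp (mappingCone.inl f) (by omega) =
    (z.comp (Cochain.ofHom f) (add_zero p)).comp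
      (Cochain.ofHom (mappingCone.inr f)) (add_zero p)
  rw [δ_comp (z : Cochain P M p) (mappingCone.inl f) (by omega) (p+1) 0 p (by omega) rfl
      (by omega),
    mappingCone.δ_inl, Int.negOnePow_neg, Int.negOnePow_one, Units.neg_smul, one_smul,
    Cochain.ofHom_comp,
    Cochain.comp_assoc_of_third_is_zero_cochain]
  abel

/-- The comparison map `mappingCone (postcomp P f) ⟶ HomComplex P (mappingCone f)`. -/
noncomputable def Psi :
    mappingCone (postcomp P f) ⟶ HomComplex P (mappingCone f) :=
  mappingCone.desc (postcomp P f) (alpha P f) (postcomp P (mappingCone.inr f)) (delta_alpha P f)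

/-- The inverse of the `p`-th component of `Psi`. -/
noncomputable def PsiInvF (p : ℤ) :
    (HomComplex P (mappingCone f)).X p ⟶ (mappingCone (postcomp P f)).X p :=
  AddCommGrpCat.ofHom
    { toFun := fun c => (c : Cochain P (mappingCone f) p).comp (mappingCone.fst f).1 rfl
      map_zero' := Cochain.zero_comp _ _
      map_add' := fun a b => Cochain.add_comp a b _ rfl } ≫
    (mappingCone.inl (postcomp P f)).v (p+1) p (by omega) +
  AddCommGrpCat.ofHom
    { toFun := fun c => (c : Cochain P (mappingCone f) p).comp (mappingCone.snd f) (add_zero p)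
      map_zero' := Cochain.zero_comp _ _
      map_add' := fun a b => Cochain.add_comp a b _ (add_zero p) } ≫
    (mappingCone.inr (postcomp P f)).f p

lemma cochain_decomp (p : ℤ) (c : Cochain P (mappingCone f) p) :
    (c.comp (mappingCone.fst f).1 rfl).comp (mappingCone.inl f) (by omega) +
      (c.comp (mappingCone.snd f) (add_zero p)).comp
        (Cochain.ofHom (mappingCone.inr f)) (add_zero p) = c := by
  rw [Cochain.comp_assoc _ _ _ rfl (add_neg_cancel 1) (by omega),
    Cochain.comp_assoc_of_third_is_zero_cochain, ← Cochain.comp_add,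
    mappingCone.id, Cochain.comp_id]

lemma PsiInv_Psi (p : ℤ) : PsiInvF P f p ≫ (Psi P f).f p = 𝟙 _ := by
  apply AddCommGrpCat.ext
  intro (c : Cochain P (mappingCone f) p)
  show (Psi P f).f p ((mappingCone.inl (postcomp P f)).v (p+1) p (by omega)
      (c.comp (mappingCone.fst f).1 rfl)
    + (mappingCone.inr (postcomp P f)).f p (c.comp (mappingCone.snd f) (add_zero p))) = c
  erw [map_add, ← comp_apply, ← comp_apply]
  rw [Psi, mappingCone.inl_v_desc_f,
    mappingCone.inr_f_desc_f]
  show ((c.comp (mappingCone.fst f).1 rfl).comp (mappingCone.inl f) (by omega))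
    + ((c.comp (mappingCone.snd f) (add_zero p)).comp
        (Cochain.ofHom (mappingCone.inr f)) (add_zero p)) = c
  exact cochain_decomp P f p c

lemma Psi_PsiInv (p : ℤ) : (Psi P f).f p ≫ PsiInvF P f p = 𝟙 _ := by
  rw [mappingCone.ext_from_iff (postcomp P f) (p+1) p rfl]
  constructor
  · rw [Category.comp_id, ← Category.assoc, Psi, mappingCone.inl_v_desc_f]
    apply AddCommGrpCat.ext
    intro (z : Cochain P M (p+1))
    show (mappingCone.inl (postcomp P f)).v (p+1) p (by omega)
        ((z.comp (mappingCone.inl f) (by omega)).comp (mappingCone.fst f).1 rfl)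
      + (mappingCone.inr (postcomp P f)).f p
        ((z.comp (mappingCone.inl f) (by omega)).comp (mappingCone.snd f) (add_zero p))
      = (mappingCone.inl (postcomp P f)).v (p+1) p (by omega) z
    rw [Cochain.comp_assoc _ _ _ (by omega) (neg_add_cancel 1) (by omega),
      mappingCone.inl_fst, Cochain.comp_id,
      Cochain.comp_assoc_of_third_is_zero_cochain, mappingCone.inl_snd,
      Cochain.comp_zero]
    erw [map_zero, add_zero]
  · rw [Category.comp_id, ← Category.assoc, Psi, mappingCone.inr_f_desc_f]
    apply AddCommGrpCat.ext
    intro (w : Cochain P M' p)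
    show (mappingCone.inl (postcomp P f)).v (p+1) p (by omega)
        ((w.comp (Cochain.ofHom (mappingCone.inr f)) (add_zero p)).comp
          (mappingCone.fst f).1 rfl)
      + (mappingCone.inr (postcomp P f)).f p
        ((w.comp (Cochain.ofHom (mappingCone.inr f)) (add_zero p)).comp
          (mappingCone.snd f) (add_zero p))
      = (mappingCone.inr (postcomp P f)).f p w
    rw [Cochain.comp_assoc_of_second_is_zero_cochain, mappingCone.inr_fst,
      Cochain.comp_zero]
    erw [map_zero, zero_add]
    rw [
      Cochain.comp_assoc_of_second_is_zero_cochain, mappingCone.inr_snd,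
      Cochain.comp_id]

instance Psi_isIso : IsIso (Psi P f) := by
  have : ∀ n : ℤ, IsIso ((Psi P f).f n) :=
    fun n => ⟨PsiInvF P f n, Psi_PsiInv P f n, PsiInv_Psi P f n⟩
  exact HomologicalComplex.Hom.isIso_of_components _

end DGAux

open DGAux in
theorem quasiIso_homComplex_postcomp
    {R : Type} [Ring R] (P M M' : CochainComplex (ModuleCat R) ℤ)
    (hP : IsDGProjective P)
    (f : M ⟶ M') (hf : QuasiIso f) :
    ∃ Φ : HomComplex P M ⟶ HomComplex P M',
      (∀ (n : ℤ) (α : Cochain P M n),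
        Φ.f n α = α.comp (Cochain.ofHom f) (add_zero n)) ∧
      QuasiIso Φ := by
  refine ⟨postcomp P f, fun n α => by rfl, ?_⟩
  rw [quasiIso_iff_exactAt_mappingCone]
  intro n
  have hcone : ∀ i : ℤ, IsZero ((mappingCone f).homology i) := fun i => by
    have := (quasiIso_iff_exactAt_mappingCone f).1 hf i
    rwa [HomologicalComplex.exactAt_iff_isZero_homology] at this
  have hexact := homComplex_exactAt hP.2 hcone n
  rw [HomologicalComplex.exactAt_iff_isZero_homology] at hexact ⊢
  exact hexact.of_iso ((HomologicalComplex.homologyFunctor _ _ n).mapIso (asIso (Psi P f)))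
end

section
/- Let R be a ring and f : P → Q a quasi-isomorphism between dg-projective cochain complexes of R-modules. Then f is a homotopy equivalence: there exists a chain map g : Q → P such that g ∘ f is chain homotopic to the identity of P and f ∘ g is chain homotopic to the identity of Q. -/
/-!
STATEMENT 1: Let R be a ring and f : P ⟶ Q a quasi-isomorphism between dg-projective
cochain complexes of R-modules. Then f is a homotopy equivalence: there exists a chain
map g : Q ⟶ P such that g ∘ f is chain homotopic to the identity of P and f ∘ g is
chain homotopic to the identity of Q.
-/

open CategoryTheory CategoryTheory.Limits

open HomotopyCategory Pretriangulated

/-- Any map in the homotopy category from a dg-projective complex to an acyclic object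
is zero. -/
lemma hom_eq_zero_of_dgProjective
    {R : Type} [Ring R] {P : CochainComplex (ModuleCat R) ℤ}
    (hP : IsDGProjective P) (Z : HomotopyCategory (ModuleCat R) (ComplexShape.up ℤ))
    (hZ : (subcategoryAcyclic (ModuleCat R)) Z)
    (φ : (quotient _ _).obj P ⟶ Z) : φ = 0 := by
  obtain ⟨Z⟩ := Z
  obtain ⟨g, rfl⟩ := (quotient _ _).map_surjective φ
  have hZ' : ∀ (n : ℤ), Z.ExactAt n :=
    (quotient_obj_mem_subcategoryAcyclic_iff_exactAt Z).1 hZ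
  have hZ'' : ∀ (n : ℤ), IsZero (Z.homology n) := fun n =>
    (Z.exactAt_iff_isZero_homology n).1 (hZ' n)
  obtain ⟨h⟩ := hP.2 Z hZ'' g
  rw [eq_of_homotopy g 0 h, Functor.map_zero]; rfl

theorem homotopyEquiv_of_quasiIso_of_dgProjective
    {R : Type} [Ring R] {P Q : CochainComplex (ModuleCat R) ℤ}
    (hP : IsDGProjective P) (hQ : IsDGProjective Q)
    (f : P ⟶ Q) (hf : QuasiIso f) :
    ∃ g : Q ⟶ P, Nonempty (Homotopy (f ≫ g) (𝟙 P)) ∧ Nonempty (Homotopy (g ≫ f) (𝟙 Q)) := by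
  set Qh := HomotopyCategory.quotient (ModuleCat R) (ComplexShape.up ℤ) with hQh
  set T := CochainComplex.mappingCone.triangleh f with hT'
  have hT : T ∈ distTriang (HomotopyCategory (ModuleCat R) (ComplexShape.up ℤ)) :=
    HomotopyCategory.mappingCone_triangleh_distinguished f
  -- the cone is acyclic
  have hfW : (subcategoryAcyclic (ModuleCat R)).trW T.mor₁ := by
    have : (HomotopyCategory.quasiIso (ModuleCat R) (ComplexShape.up ℤ)) (Qh.map f) := by
      rw [quotient_map_mem_quasiIso_iff, HomologicalComplex.mem_quasiIso_iff]
      exact hf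
    rw [quasiIso_eq_subcategoryAcyclic_W] at this
    exact this
  have hcone : (subcategoryAcyclic (ModuleCat R)) T.obj₃ :=
    ((subcategoryAcyclic (ModuleCat R)).trW_iff_of_distinguished T hT).1 hfW
  -- surjectivity: find g with g ≫ f homotopic to 𝟙 Q
  obtain ⟨γ, hγ⟩ := Triangle.coyoneda_exact₂ T hT (𝟙 (Qh.obj Q))
    (by exact hom_eq_zero_of_dgProjective hQ T.obj₃ hcone _)
  obtain ⟨g, hg⟩ := Qh.map_surjective (show Qh.obj Q ⟶ Qh.obj P from γ)
  have hgf : Qh.map g ≫ Qh.map f = 𝟙 (Qh.obj Q) := by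
    rw [hg]; exact hγ.symm
  have h2 : Homotopy (g ≫ f) (𝟙 Q) := by
    apply homotopyOfEq
    rw [CategoryTheory.Functor.map_comp, CategoryTheory.Functor.map_id]
    exact hgf
  -- injectivity: f ≫ g homotopic to 𝟙 P
  have hconeShift : (subcategoryAcyclic (ModuleCat R)) (T.obj₃⟦(-1 : ℤ)⟧) :=
    (subcategoryAcyclic (ModuleCat R)).le_shift (-1) T.obj₃ hcone
  have ha : (Qh.map (f ≫ g) - 𝟙 (Qh.obj P)) ≫ T.mor₁ = 0 := by
    have e : T.mor₁ = Qh.map f := rfl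
    show (Qh.map (f ≫ g) - 𝟙 (Qh.obj P)) ≫ Qh.map f = 0
    rw [Preadditive.sub_comp, Category.id_comp, CategoryTheory.Functor.map_comp,
      Category.assoc, hgf, Category.comp_id, sub_self]
  obtain ⟨b, hb⟩ := Triangle.coyoneda_exact₂ _ (inv_rot_of_distTriang T hT)
    (Qh.map (f ≫ g) - 𝟙 (Qh.obj P)) ha
  have hb0 : b = 0 := hom_eq_zero_of_dgProjective hP _ hconeShift b
  have : Qh.map (f ≫ g) - 𝟙 (Qh.obj P) = 0 := by rw [hb, hb0, zero_comp]; rfl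
  have h1 : Homotopy (f ≫ g) (𝟙 P) := by
    apply homotopyOfEq
    rw [CategoryTheory.Functor.map_id]
    exact sub_eq_zero.1 this
  exact ⟨g, ⟨h1⟩, ⟨h2⟩⟩
end

section
/- Let R be a ring, P a bounded cochain complex of projective R-modules, and M any cochain complex of R-modules. Then the localization functor from the homotopy category K(R) to the derived category D(R) induces a bijection Hom_{K(R)}(P, M) → Hom_{D(R)}(P, M); that is, morphisms P → M in the derived category are in natural bijection with chain maps P → M modulo chain homotopy. -/
/-!
STATEMENT 10: Let R be a ring, P a bounded cochain complex of projective R-modules, and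
M any cochain complex of R-modules. Then the localization functor K(R) → D(R) induces a
bijection Hom_{K(R)}(P, M) → Hom_{D(R)}(P, M); that is, morphisms P → M in the derived
category are in natural bijection with chain maps P → M modulo chain homotopy.
-/

open CategoryTheory CategoryTheory.Limits

section Aux
variable {R : Type} [Ring R]

lemma lift_through_d (N : CochainComplex (ModuleCat R) ℤ) (hN : ∀ n, N.ExactAt n)
    (Q : ModuleCat R) [Module.Projective R Q] (j : ℤ)
    (y : Q ⟶ N.X j) (hy : y ≫ N.d j (j+1) = 0) :
    ∃ g : Q ⟶ N.X (j-1), g ≫ N.d (j-1) j = y := by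
  have hex := (HomologicalComplex.exactAt_iff' N (j-1) j (j+1)
    (by simp [CochainComplex.prev]) (by simp [CochainComplex.next])).1 (hN j)
  rw [ShortComplex.moduleCat_exact_iff] at hex
  dsimp at hex
  set Kk : Submodule R (N.X j) := LinearMap.ker (N.d j (j+1)).hom
  have hmem : ∀ x : N.X (j-1), N.d (j-1) j x ∈ Kk := fun x => by
    have := congrArg (fun (φ : N.X (j-1) ⟶ N.X (j+1)) => φ x) (N.d_comp_d (j-1) j (j+1))
    exact this
  let d' : N.X (j-1) →ₗ[R] Kk := LinearMap.codRestrict Kk (N.d (j-1) j).hom hmem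
  have hsurj : Function.Surjective d' := by
    rintro ⟨x, hx⟩
    obtain ⟨x₁, hx₁⟩ := hex x hx
    exact ⟨x₁, Subtype.ext hx₁⟩
  have hymem : ∀ q : Q, y q ∈ Kk := fun q => by
    have := congrArg (fun (φ : Q ⟶ N.X (j+1)) => φ q) hy
    exact this
  let y' : Q →ₗ[R] Kk := LinearMap.codRestrict Kk y.hom hymem
  obtain ⟨g, hg⟩ := Module.projective_lifting_property d' y' hsurj
  refine ⟨ModuleCat.ofHom g, ModuleCat.hom_ext (LinearMap.ext fun q => ?_)⟩
  have := congrArg Subtype.val (LinearMap.congr_fun hg q)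
  exact this

lemma nullhomotopic_of_acyclic (P N : CochainComplex (ModuleCat R) ℤ) (a b : ℤ)
    (hPbdd : ∀ i : ℤ, (i < a ∨ b < i) → IsZero (P.X i))
    (hPproj : ∀ i : ℤ, Module.Projective R (P.X i))
    (hN : ∀ n, N.ExactAt n) (f : P ⟶ N) : Nonempty (Homotopy f 0) := by
  -- inductive construction of partial homotopies
  have key : ∀ n : ℕ, ∃ hom : ∀ i j : ℤ, P.X i ⟶ N.X j,
      (∀ i j, ¬ (ComplexShape.up ℤ).Rel j i → hom i j = 0) ∧
      (∀ i i' i'' : ℤ, b + 1 - n ≤ i → i' = i + 1 → i'' = i - 1 →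
        f.f i = P.d i i' ≫ hom i' i + hom i i'' ≫ N.d i'' i) := by
    intro n
    induction n with
    | zero =>
      refine ⟨fun _ _ => 0, fun _ _ _ => rfl, fun i i' i'' hi h1 h2 => ?_⟩
      have hz : IsZero (P.X i) := hPbdd i (Or.inr (by push_cast at hi; omega))
      simp only [comp_zero, zero_comp, add_zero]
      exact hz.eq_of_src _ _
    | succ n ih =>
      obtain ⟨hom, hz, hcomm⟩ := ih
      set j : ℤ := b - n with hj
      -- construct the lift at degree j
      have hproj := hPproj j
      have hy : (f.f j - P.d j (j+1) ≫ hom (j+1) j) ≫ N.d j (j+1) = 0 := by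
        have hc := hcomm (j+1) (j+2) j (by omega) (by omega) (by omega)
        rw [Preadditive.sub_comp, f.comm j (j+1), hc]
        simp only [Preadditive.add_comp, Category.assoc,
          HomologicalComplex.d_comp_d, comp_zero, zero_comp,
          HomologicalComplex.d_comp_d_assoc, zero_add]
        rw [Preadditive.comp_add, HomologicalComplex.d_comp_d_assoc, zero_comp, zero_add]
        exact sub_self _
      obtain ⟨g, hg⟩ := lift_through_d N hN (P.X j) j _ hy
      refine ⟨fun i j' => if hi : i = j then (if hj' : j' = j - 1 then
          eqToHom (congrArg P.X hi) ≫ g ≫ eqToHom (congrArg N.X hj'.symm) else hom i j')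
          else hom i j', ?_, ?_⟩
      · intro i j' hrel
        dsimp only
        by_cases hi : i = j
        · by_cases hj' : j' = j - 1
          · refine absurd ?_ hrel
            show j' + 1 = i
            omega
          · rw [dif_pos hi, dif_neg hj']; exact hz _ _ hrel
        · rw [dif_neg hi]; exact hz _ _ hrel
      · intro i i' i'' hi h1 h2
        subst h1 h2
        dsimp only
        by_cases hij : i = j
        · subst hij
          rw [dif_neg (show j + 1 ≠ j by omega), dif_pos rfl, dif_pos rfl]
          simp only [eqToHom_refl, Category.comp_id, Category.id_comp]
          rw [hg]
          abel
        · have hij' : ¬ (i + 1 = j) := by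
            push_cast at hi
            omega
          rw [dif_neg hij', dif_neg hij]
          exact hcomm i (i+1) (i-1) (by push_cast at hi ⊢; omega) rfl rfl
  -- now conclude
  set a' : ℤ := min a (b + 1) with ha'
  obtain ⟨hom, hz, hcomm⟩ := key (b + 1 - a').toNat
  have hcast : (((b + 1 - a').toNat : ℤ)) = b + 1 - a' := by omega
  refine ⟨⟨hom, hz, fun i => ?_⟩⟩
  rw [dNext_eq hom (show (ComplexShape.up ℤ).Rel i (i+1) from rfl),
    prevD_eq hom (show (ComplexShape.up ℤ).Rel (i-1) i by simp)]
  by_cases hi : a' ≤ i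
  · have := hcomm i (i+1) (i-1) (by omega) rfl rfl
    rw [this]
    simp
  · have hzi : IsZero (P.X i) := hPbdd i (Or.inl (by omega))
    have h0 : HomologicalComplex.Hom.f (0 : P ⟶ N) i = 0 := rfl
    rw [h0, add_zero, hzi.eq_of_src (f.f i) 0, hzi.eq_of_src (P.d i (i+1)) 0,
      hzi.eq_of_src (hom i (i-1)) 0]
    simp


variable (P : CochainComplex (ModuleCat R) ℤ) (a b : ℤ)
    (hPbdd : ∀ i : ℤ, (i < a ∨ b < i) → IsZero (P.X i))
    (hPproj : ∀ i : ℤ, Module.Projective R (P.X i))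


include hPbdd hPproj in
lemma hom_eq_zero_of_acyclic (X : HomotopyCategory (ModuleCat R) (ComplexShape.up ℤ))
    (hX : (HomotopyCategory.subcategoryAcyclic (ModuleCat R)) X)
    (φ : (HomotopyCategory.quotient (ModuleCat R) (ComplexShape.up ℤ)).obj P ⟶ X) : φ = 0 := by
  obtain ⟨N⟩ := X
  have hN : ∀ n, N.ExactAt n :=
    (HomotopyCategory.quotient_obj_mem_subcategoryAcyclic_iff_exactAt N).1 hX
  obtain ⟨f, rfl⟩ := (HomotopyCategory.quotient (ModuleCat R) (ComplexShape.up ℤ)).map_surjective φ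
  obtain ⟨h⟩ := nullhomotopic_of_acyclic P N a b hPbdd hPproj hN f
  rw [HomotopyCategory.eq_of_homotopy _ _ h, Functor.map_zero]
  rfl

include hPbdd hPproj in
lemma precomp_bijective_of_quasiIso
    {Y Z : HomotopyCategory (ModuleCat R) (ComplexShape.up ℤ)} (s : Y ⟶ Z)
    (hs : HomotopyCategory.quasiIso (ModuleCat R) (ComplexShape.up ℤ) s) :
    Function.Bijective (fun (φ : (HomotopyCategory.quotient (ModuleCat R) (ComplexShape.up ℤ)).obj P ⟶ Y) => φ ≫ s) := by
  rw [HomotopyCategory.quasiIso_eq_subcategoryAcyclic_W] at hs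
  obtain ⟨C, g, h, hT, hC⟩ := hs
  constructor
  · intro φ₁ φ₂ hφ
    simp only at hφ
    have h0 : (φ₁ - φ₂) ≫ s = 0 := by
      rw [Preadditive.sub_comp, hφ]
      exact sub_self _
    obtain ⟨e, he⟩ := Pretriangulated.Triangle.coyoneda_exact₂ _
      (Pretriangulated.inv_rot_of_distTriang _ hT) (φ₁ - φ₂) h0
    rw [hom_eq_zero_of_acyclic P a b hPbdd hPproj _
      ((HomotopyCategory.subcategoryAcyclic (ModuleCat R)).le_shift (-1) _ hC) e] at he
    exact sub_eq_zero.1 (he.trans zero_comp)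
  · intro ψ
    have h0 : ψ ≫ g = 0 :=
      hom_eq_zero_of_acyclic P a b hPbdd hPproj _ hC (ψ ≫ g)
    obtain ⟨φ, hφ⟩ := Pretriangulated.Triangle.coyoneda_exact₂ _ hT ψ h0
    exact ⟨φ, hφ.symm⟩


end Aux


theorem homotopyCategory_hom_equiv_derivedCategory_hom
    {R : Type} [Ring R] [HasDerivedCategory (ModuleCat R)]
    (P M : CochainComplex (ModuleCat R) ℤ)
    (hPbdd : ∃ a b : ℤ, ∀ i : ℤ, (i < a ∨ b < i) → IsZero (P.X i))
    (hPproj : ∀ i : ℤ, Module.Projective R (P.X i)) :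
    Function.Bijective
      (fun (f : (HomotopyCategory.quotient (ModuleCat R) (ComplexShape.up ℤ)).obj P ⟶
          (HomotopyCategory.quotient (ModuleCat R) (ComplexShape.up ℤ)).obj M) =>
        DerivedCategory.Qh.map f) := by
  obtain ⟨a, b, hPbdd⟩ := hPbdd
  set W := HomotopyCategory.quasiIso (ModuleCat R) (ComplexShape.up ℤ) with hW
  have hWe := HomotopyCategory.quasiIso_eq_subcategoryAcyclic_W (ModuleCat R)
  haveI : W.HasLeftCalculusOfFractions := by rw [hW, hWe]; infer_instance
  constructor
  · intro f₁ f₂ hf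
    simp only at hf
    rw [MorphismProperty.map_eq_iff_postcomp DerivedCategory.Qh W] at hf
    obtain ⟨Z, s, hs, fac⟩ := hf
    exact (precomp_bijective_of_quasiIso P a b hPbdd hPproj s hs).1 fac
  · intro F
    obtain ⟨φ, hφ⟩ := Localization.exists_leftFraction DerivedCategory.Qh W F
    obtain ⟨g, hg⟩ := (precomp_bijective_of_quasiIso P a b hPbdd hPproj φ.s φ.hs).2 φ.f
    refine ⟨g, ?_⟩
    simp only
    rw [hφ, MorphismProperty.LeftFraction.map_eq]
    rw [← hg, DerivedCategory.Qh.map_comp]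
    simp [Category.assoc]
end
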